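/- Let \widehat{f_n}(k) = (sinc(k√3/√n))^n, the characteristic function of the normalized sum Z^{(n)} = (U_1 + ⋯ + U_n)/√n of n i.i.d. Uniform(−√3, √3) random variables, and let φ(x) = (1/√(2π)) e^{−x²/2}. Then for every ε ∈ (0, 1/4) there exists a constant C > 0 such that for all n ≥ 1 and all real x, | (1/(2π)) ∫_{|k| ≤ n^ε} \widehat{f_n}(k) e^{−ikx} dk − φ(x) | ≤ C·n^{−1+4ε}. -/

import Mathlib

open MeasureTheory Filter

/-- The (unnormalized) sinc function: `sinc u = sin u / u` for `u ≠ 0`, `sinc 0 = 1`. -/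
noncomputable def sinc (u : ℝ) : ℝ := if u = 0 then 1 else Real.sin u / u

/-- The standard Gaussian density. -/
noncomputable def gaussDensity (x : ℝ) : ℝ :=
  (1 / Real.sqrt (2 * Real.pi)) * Real.exp (-x ^ 2 / 2)

open Real hiding sinc sinc_neg measurable_sinc

lemma mono_help {f f' : ℝ → ℝ} (hd : ∀ v, HasDerivAt f (f' v) v)
    (h0 : ∀ v, 0 < v → 0 ≤ f' v) {u : ℝ} (hu : 0 ≤ u) : f 0 ≤ f u := by
  have hdiff : Differentiable ℝ f := fun v => (hd v).differentiableAt
  have hm : MonotoneOn f (Set.Ici (0:ℝ)) := by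
    refine monotoneOn_of_deriv_nonneg (convex_Ici 0) hdiff.continuous.continuousOn
      (hdiff.differentiableOn) ?_
    intro v hv
    rw [interior_Ici] at hv
    rw [(hd v).deriv]
    exact h0 v hv
  exact hm Set.self_mem_Ici hu hu

lemma sin_lb {u : ℝ} (hu : 0 ≤ u) : u - u^3/6 ≤ Real.sin u := by
  have := mono_help (f := fun v => Real.sin v - (v - v^3/6))
      (f' := fun v => Real.cos v - (1 - v^2/2)) ?_ ?_ hu
  · simpa using this
  · intro v
    have h1 : HasDerivAt Real.sin (Real.cos v) v := Real.hasDerivAt_sin v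
    have h2 : HasDerivAt (fun w : ℝ => w - w^3/6) (1 - v^2/2) v := by
      have := ((hasDerivAt_id v).sub (((hasDerivAt_pow 3 v)).div_const 6))
      refine this.congr_deriv ?_
      ring
    exact h1.sub h2
  · intro v _
    have := Real.one_sub_sq_div_two_le_cos (x := v)
    linarith

lemma cos_ub {u : ℝ} (hu : 0 ≤ u) : Real.cos u ≤ 1 - u^2/2 + u^4/24 := by
  have := mono_help (f := fun v => (1 - v^2/2 + v^4/24) - Real.cos v)
      (f' := fun v => Real.sin v - (v - v^3/6)) ?_ ?_ hu
  · simp at this; linarith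
  · intro v
    have h2 : HasDerivAt (fun w : ℝ => 1 - w^2/2 + w^4/24) (-(v) + v^3/6) v := by
      have := (((hasDerivAt_pow 2 v).div_const 2).const_sub 1).add ((hasDerivAt_pow 4 v).div_const 24)
      refine this.congr_deriv ?_
      ring
    have := h2.sub (Real.hasDerivAt_cos v)
    refine this.congr_deriv ?_
    ring
  · intro v hv
    have := sin_lb hv.le
    linarith

lemma sin_ub {u : ℝ} (hu : 0 ≤ u) : Real.sin u ≤ u - u^3/6 + u^5/120 := by
  have := mono_help (f := fun v => (v - v^3/6 + v^5/120) - Real.sin v)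
      (f' := fun v => (1 - v^2/2 + v^4/24) - Real.cos v) ?_ ?_ hu
  · simp at this; linarith
  · intro v
    have h2 : HasDerivAt (fun w : ℝ => w - w^3/6 + w^5/120) (1 - v^2/2 + v^4/24) v := by
      have := ((hasDerivAt_id v).sub ((hasDerivAt_pow 3 v).div_const 6)).add
        ((hasDerivAt_pow 5 v).div_const 120)
      refine this.congr_deriv ?_
      ring
    exact h2.sub (Real.hasDerivAt_sin v)
  · intro v hv
    have := cos_ub hv.le
    linarith

lemma sinc_neg (u : ℝ) : sinc (-u) = sinc u := by
  unfold sinc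
  rcases eq_or_ne u 0 with h | h
  · simp [h]
  · rw [if_neg (neg_ne_zero.mpr h), if_neg h, Real.sin_neg, neg_div_neg_eq]

lemma sinc_lb (u : ℝ) : 1 - u^2/6 ≤ sinc u := by
  rcases le_total 0 u with hu | hu
  · rcases eq_or_ne u 0 with h | h
    · simp [h, sinc]
    · have hpos : 0 < u := lt_of_le_of_ne hu (Ne.symm h)
      rw [sinc, if_neg h, le_div_iff₀ hpos]
      have := sin_lb hu
      nlinarith
  · rcases eq_or_ne u 0 with h | h
    · simp [h, sinc]
    · have hpos : 0 < -u := by simpa using lt_of_le_of_ne hu h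
      rw [← sinc_neg u, sinc, if_neg hpos.ne', le_div_iff₀ hpos]
      have := sin_lb hpos.le
      nlinarith

lemma sinc_ub (u : ℝ) : sinc u ≤ 1 - u^2/6 + u^4/120 := by
  rcases le_total 0 u with hu | hu
  · rcases eq_or_ne u 0 with h | h
    · simp [h, sinc]
    · have hpos : 0 < u := lt_of_le_of_ne hu (Ne.symm h)
      rw [sinc, if_neg h, div_le_iff₀ hpos]
      have := sin_ub hu
      nlinarith
  · rcases eq_or_ne u 0 with h | h
    · simp [h, sinc]
    · have hpos : 0 < -u := by simpa using lt_of_le_of_ne hu h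
      rw [← sinc_neg u, sinc, if_neg hpos.ne', div_le_iff₀ hpos]
      have := sin_ub hpos.le
      nlinarith

lemma sinc_abs_le_one (u : ℝ) : |sinc u| ≤ 1 := by
  rcases eq_or_ne u 0 with h | h
  · simp [h, sinc]
  · rw [sinc, if_neg h, abs_div]
    rw [div_le_one (abs_pos.mpr h)]
    exact Real.abs_sin_le_abs

lemma exp_neg_ub {t : ℝ} (ht : 0 ≤ t) : Real.exp (-t) ≤ 1 - t + t^2/2 := by
  have := mono_help (f := fun v => (1 - v + v^2/2) - Real.exp (-v))
      (f' := fun v => (-1 + v) + Real.exp (-v)) ?_ ?_ ht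
  · simp at this; linarith
  · intro v
    have h1 : HasDerivAt (fun w : ℝ => Real.exp (-w)) (-Real.exp (-v)) v := by
      exact ((Real.hasDerivAt_exp (-v)).comp v (hasDerivAt_neg v)).congr_deriv (by ring)
    have h2 : HasDerivAt (fun w : ℝ => 1 - w + w^2/2) (-1 + v) v := by
      have := (((hasDerivAt_id v).const_sub 1)).add ((hasDerivAt_pow 2 v).div_const 2)
      refine this.congr_deriv ?_
      ring
    refine (h2.sub h1).congr_deriv ?_
    ring
  · intro v hv
    have := Real.add_one_le_exp (-v)
    have h3 : 0 < Real.exp (-v) := Real.exp_pos _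
    nlinarith

lemma exp_neg_lb (t : ℝ) : 1 - t ≤ Real.exp (-t) := by
  have := Real.add_one_le_exp (-t); linarith

lemma abs_pow_sub_pow {a b M : ℝ} (ha : 0 ≤ a) (hb : 0 ≤ b) (haM : a ≤ M) (hbM : b ≤ M)
    (n : ℕ) : |a^n - b^n| ≤ n * M^(n-1) * |a - b| := by
  induction n with
  | zero => simp
  | succ m ih =>
    have hM : 0 ≤ M := le_trans ha haM
    have key : a^(m+1) - b^(m+1) = a * (a^m - b^m) + b^m * (a - b) := by ring
    calc |a^(m+1) - b^(m+1)| ≤ |a * (a^m - b^m)| + |b^m * (a - b)| := by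
          rw [key]; exact abs_add_le _ _
      _ = a * |a^m - b^m| + b^m * |a - b| := by
          rw [abs_mul, abs_mul, abs_of_nonneg ha, abs_of_nonneg (pow_nonneg hb m)]
      _ ≤ M * (m * M^(m-1) * |a - b|) + M^m * |a - b| := by
          gcongr
      _ ≤ (m+1) * M^m * |a - b| := by
          rcases Nat.eq_zero_or_pos m with hm | hm
          · subst hm; simp
          · have : M * (m * M^(m-1) * |a - b|) = m * (M * M^(m-1)) * |a - b| := by ring
            rw [this, ← pow_succ']
            have hms : m - 1 + 1 = m := Nat.succ_pred_eq_of_pos hm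
            rw [hms]
            push_cast
            ring_nf
            nlinarith [abs_nonneg (a-b), pow_nonneg hM m]
      _ = (↑(m+1)) * M^((m+1)-1) * |a - b| := by push_cast; simp

-- core pointwise estimate
lemma core_est {u : ℝ} (hu : u^2 ≤ 3) (n : ℕ) :
    |sinc u ^ n - Real.exp (-(u^2/6)) ^ n| ≤ n * Real.exp (-(u^2/12))^(n-1) * (u^4/36) := by
  have hu2 : 0 ≤ u^2 := sq_nonneg u
  have hlb := sinc_lb u
  have hub := sinc_ub u
  have ha : 0 ≤ sinc u := by nlinarith
  have hb : (0:ℝ) ≤ Real.exp (-(u^2/6)) := (Real.exp_pos _).le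
  -- |sinc u - exp(-(u^2/6))| ≤ u^4/36
  have hel : 1 - u^2/6 ≤ Real.exp (-(u^2/6)) := by simpa using exp_neg_lb (u^2/6)
  have heu : Real.exp (-(u^2/6)) ≤ 1 - u^2/6 + u^4/72 := by
    have := exp_neg_ub (t := u^2/6) (by positivity)
    nlinarith
  have hd : |sinc u - Real.exp (-(u^2/6))| ≤ u^4/36 := by
    rw [abs_le]
    constructor <;> nlinarith
  -- both ≤ exp(-(u^2/12))
  have hM1 : sinc u ≤ Real.exp (-(u^2/12)) := by
    have h12 : 1 - u^2/12 ≤ Real.exp (-(u^2/12)) := by simpa using exp_neg_lb (u^2/12)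
    nlinarith
  have hM2 : Real.exp (-(u^2/6)) ≤ Real.exp (-(u^2/12)) := by
    apply Real.exp_le_exp.mpr; nlinarith
  calc |sinc u ^ n - Real.exp (-(u^2/6)) ^ n|
      ≤ n * Real.exp (-(u^2/12))^(n-1) * |sinc u - Real.exp (-(u^2/6))| :=
        abs_pow_sub_pow ha hb hM1 hM2 n
    _ ≤ n * Real.exp (-(u^2/12))^(n-1) * (u^4/36) := by
        gcongr

lemma gauss_integrand_eq (x k : ℝ) :
    ((Real.exp (-(k^2/2)) : ℝ) : ℂ) * Complex.exp (-(Complex.I*k*x)) =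
      Complex.exp (Complex.I * (-(x:ℂ)) * k) * Complex.exp (-(1/2:ℂ) * k^2) := by
  rw [Complex.ofReal_exp, mul_comm]
  congr 2
  · push_cast; ring
  · push_cast; ring

lemma gauss_fourier (x : ℝ) :
    ∫ k : ℝ, ((Real.exp (-(k^2/2)) : ℝ) : ℂ) * Complex.exp (-(Complex.I*k*x)) =
      ((Real.sqrt (2*Real.pi) * Real.exp (-x^2/2) : ℝ) : ℂ) := by
  have hb : (0:ℝ) < (1/2:ℂ).re := by norm_num
  have h := fourierIntegral_gaussian hb (-(x:ℂ))
  rw [show (fun k : ℝ => ((Real.exp (-(k^2/2)) : ℝ) : ℂ) * Complex.exp (-(Complex.I*k*x)))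
      = fun k : ℝ => Complex.exp (Complex.I * (-(x:ℂ)) * k) * Complex.exp (-(1/2:ℂ) * k^2)
      from funext fun k => gauss_integrand_eq x k] at *
  rw [h]
  have h1 : (↑Real.pi / (1/2:ℂ)) = ((2*Real.pi : ℝ) : ℂ) := by push_cast; ring
  have h2 : ((2*Real.pi : ℝ) : ℂ) ^ (1/2 : ℂ) = ((Real.sqrt (2*Real.pi) : ℝ) : ℂ) := by
    rw [Real.sqrt_eq_rpow, Complex.ofReal_cpow (by positivity)]
    norm_num
  have h3 : -(-(x:ℂ))^2/(4*(1/2)) = (((-x^2/2 : ℝ)) : ℂ) := by push_cast; ring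
  rw [h1, h2, h3, ← Complex.ofReal_exp, ← Complex.ofReal_mul]

lemma gauss_integrable (x : ℝ) :
    Integrable (fun k : ℝ => ((Real.exp (-(k^2/2)) : ℝ) : ℂ) * Complex.exp (-(Complex.I*k*x))) := by
  have : Integrable (fun k : ℝ => Complex.exp (-(1/2:ℂ) * k^2 + (Complex.I * (-(x:ℂ))) * k + 0)) :=
    integrable_cexp_quadratic (by norm_num : (0:ℝ) < (1/2:ℂ).re) _ _
  apply this.congr
  filter_upwards with k
  rw [gauss_integrand_eq x k, ← Complex.exp_add]
  ring_nf

lemma measurable_sinc : Measurable sinc := by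
  unfold sinc
  exact Measurable.ite (measurableSet_eq) measurable_const (Real.measurable_sin.div measurable_id)

lemma fhat_integrableOn (n : ℕ) (x T : ℝ) :
    IntegrableOn (fun k : ℝ => ((sinc (k * Real.sqrt 3 / Real.sqrt n) ^ n : ℝ) : ℂ) *
      Complex.exp (-(Complex.I*k*x))) (Set.Icc (-T) T) := by
  have hmeas : AEStronglyMeasurable (fun k : ℝ => ((sinc (k * Real.sqrt 3 / Real.sqrt n) ^ n : ℝ) : ℂ) *
      Complex.exp (-(Complex.I*k*x))) volume := by
    apply AEStronglyMeasurable.mul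
    · exact (Complex.measurable_ofReal.comp
        ((measurable_sinc.comp ((measurable_id.mul_const _).div_const _)).pow_const n)).aestronglyMeasurable
    · exact (Complex.continuous_exp.comp
        (((continuous_const.mul Complex.continuous_ofReal).mul continuous_const).neg : Continuous fun k : ℝ => -(Complex.I * (k:ℂ) * (x:ℂ)))).aestronglyMeasurable
  apply Measure.integrableOn_of_bounded (M := 1) (measure_Icc_lt_top).ne hmeas
  filter_upwards with k
  rw [norm_mul, Complex.norm_exp]
  have h1 : ‖(((sinc (k * Real.sqrt 3 / Real.sqrt n) ^ n : ℝ) : ℂ))‖ ≤ 1 := by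
    rw [Complex.norm_real, Real.norm_eq_abs, abs_pow]
    exact pow_le_one₀ (abs_nonneg _) (sinc_abs_le_one _)
  have h2 : (-(Complex.I*k*x)).re = 0 := by simp
  rw [h2, Real.exp_zero, mul_one]
  exact h1


lemma tail_exp_bound {ε : ℝ} (hε0 : 0 < ε) {n : ℕ} (hn : 1 ≤ n) :
    Real.exp (-(((n:ℝ)^ε)^2/4)) ≤
      ((Nat.factorial ⌈1/(2*ε)⌉₊ : ℝ) * 4^(⌈1/(2*ε)⌉₊ : ℕ)) / n := by
  set m : ℕ := ⌈1/(2*ε)⌉₊ with hm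
  have hn1 : (1:ℝ) ≤ (n:ℝ) := by exact_mod_cast hn
  have hn0 : (0:ℝ) < (n:ℝ) := by linarith
  set t : ℝ := ((n:ℝ)^ε)^2/4 with ht
  have htn : (n:ℝ) / 4^m ≤ t^m := by
    have h1 : ((n:ℝ)^ε)^2 = (n:ℝ)^(2*ε) := by
      rw [← Real.rpow_natCast ((n:ℝ)^ε) 2, ← Real.rpow_mul hn0.le]
      norm_num [mul_comm]
    have h2 : t^m = ((n:ℝ)^(2*ε))^m / 4^m := by
      rw [ht, h1, div_pow]
    have h3 : ((n:ℝ)^(2*ε))^m = (n:ℝ)^(2*ε*m) := by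
      rw [← Real.rpow_natCast ((n:ℝ)^(2*ε)) m, ← Real.rpow_mul hn0.le]
    have h4 : (1:ℝ) ≤ 2*ε*m := by
      have hc : 1/(2*ε) ≤ (m:ℝ) := Nat.le_ceil _
      have h2e : 0 < 2*ε := by linarith
      calc (1:ℝ) = 2*ε * (1/(2*ε)) := by field_simp
        _ ≤ 2*ε*m := by gcongr
    have h5 : (n:ℝ) ≤ (n:ℝ)^(2*ε*m) := by
      calc (n:ℝ) = (n:ℝ)^(1:ℝ) := (Real.rpow_one _).symm
        _ ≤ (n:ℝ)^(2*ε*m) := Real.rpow_le_rpow_of_exponent_le hn1 h4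
    rw [h2, h3]
    gcongr
  have hfac : t^m ≤ (Nat.factorial m : ℝ) * Real.exp t := by
    have := Real.pow_div_factorial_le_exp t (by positivity) m
    have hf0 : (0:ℝ) < (Nat.factorial m : ℝ) := by positivity
    rw [div_le_iff₀ hf0] at this
    linarith [this]
  rw [le_div_iff₀ hn0]
  have e1 : Real.exp (-t) * n ≤ Real.exp (-t) * (4^m * t^m) := by
    have : (n:ℝ) ≤ 4^m * t^m := by
      rw [← div_le_iff₀' (by positivity)]
      exact htn
    gcongr
  have e2 : Real.exp (-t) * (4^m * t^m) ≤ Real.exp (-t) * (4^m * ((Nat.factorial m : ℝ) * Real.exp t)) := by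
    gcongr
  have e3 : Real.exp (-t) * (4^m * ((Nat.factorial m : ℝ) * Real.exp t))
      = (Nat.factorial m : ℝ) * 4^m * (Real.exp (-t) * Real.exp t) := by ring
  have e4 : Real.exp (-t) * Real.exp t = 1 := by
    rw [← Real.exp_add]; simp
  calc Real.exp (-t) * n ≤ Real.exp (-t) * (4^m * t^m) := e1
    _ ≤ Real.exp (-t) * (4^m * ((Nat.factorial m : ℝ) * Real.exp t)) := e2
    _ = (Nat.factorial m : ℝ) * 4^m * (Real.exp (-t) * Real.exp t) := e3
    _ = (Nat.factorial m : ℝ) * 4^m := by rw [e4, mul_one]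

lemma pointwise_main {ε : ℝ} (hε4 : ε ≤ 1/4) {n : ℕ} (hn : 2 ≤ n) {k : ℝ}
    (hk : k^2 ≤ ((n:ℝ)^ε)^2) (hε0 : 0 < ε) :
    |sinc (k * Real.sqrt 3 / Real.sqrt n) ^ n - Real.exp (-(k^2/2))| ≤
      ((n:ℝ)^ε)^4/(4*n) * Real.exp (-(1/8)*k^2) := by
  have hn1 : (1:ℝ) ≤ (n:ℝ) := by exact_mod_cast Nat.one_le_of_lt hn
  have hn0 : (0:ℝ) < (n:ℝ) := by linarith
  set u : ℝ := k * Real.sqrt 3 / Real.sqrt n with hu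
  have hu2 : u^2 = 3*k^2/(n:ℝ) := by
    rw [hu, div_pow, mul_pow, Real.sq_sqrt (by norm_num : (0:ℝ) ≤ 3),
      Real.sq_sqrt hn0.le]
    ring
  have hT2 : ((n:ℝ)^ε)^2 ≤ (n:ℝ) := by
    have h1 : ((n:ℝ)^ε)^2 = (n:ℝ)^(2*ε) := by
      rw [← Real.rpow_natCast ((n:ℝ)^ε) 2, ← Real.rpow_mul hn0.le]
      norm_num [mul_comm]
    rw [h1]
    calc (n:ℝ)^(2*ε) ≤ (n:ℝ)^(1:ℝ) :=
        Real.rpow_le_rpow_of_exponent_le hn1 (by linarith)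
      _ = (n:ℝ) := Real.rpow_one _
  have hk2n : k^2 ≤ (n:ℝ) := le_trans hk hT2
  have hu3 : u^2 ≤ 3 := by
    rw [hu2, div_le_iff₀ hn0]
    nlinarith
  have hcore := core_est hu3 n
  have hbn : Real.exp (-(u^2/6)) ^ n = Real.exp (-(k^2/2)) := by
    rw [← Real.exp_nat_mul]
    congr 1
    rw [hu2]
    field_simp
    ring
  rw [hbn] at hcore
  refine le_trans hcore ?_
  -- bound RHS
  have hexp : Real.exp (-(u^2/12))^(n-1) ≤ Real.exp (-(1/8)*k^2) := by
    rw [← Real.exp_nat_mul, Real.exp_le_exp]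
    have hcast : ((n-1 : ℕ) : ℝ) = (n:ℝ) - 1 := by
      rw [Nat.cast_sub (Nat.one_le_of_lt hn)]; norm_num
    rw [hcast, hu2]
    have hn2 : (2:ℝ) ≤ (n:ℝ) := by exact_mod_cast hn
    have h1 : (1:ℝ)/2 ≤ ((n:ℝ)-1)/(n:ℝ) := by
      rw [le_div_iff₀ hn0]; linarith
    have h2 : ((n:ℝ) - 1) * -(3 * k ^ 2 / (n:ℝ) / 12) = -((((n:ℝ))-1)/(n:ℝ) * (k^2/4)) := by
      field_simp
      ring
    rw [h2]
    nlinarith [mul_le_mul_of_nonneg_right h1 (by positivity : (0:ℝ) ≤ k^2/4)]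
  have hu4 : u^4 = 9*k^4/(n:ℝ)^2 := by
    have : u^4 = (u^2)^2 := by ring
    rw [this, hu2]
    field_simp
    ring
  have hk4 : k^4 ≤ ((n:ℝ)^ε)^4 := by
    have : k^4 = (k^2)^2 := by ring
    rw [this, show ((n:ℝ)^ε)^4 = (((n:ℝ)^ε)^2)^2 by ring]
    gcongr
  calc (n:ℝ) * Real.exp (-(u^2/12))^(n-1) * (u^4/36)
      ≤ (n:ℝ) * Real.exp (-(1/8)*k^2) * (u^4/36) := by
        gcongr
    _ = k^4/(4*(n:ℝ)) * Real.exp (-(1/8)*k^2) := by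
        rw [hu4]
        field_simp
        ring
    _ ≤ ((n:ℝ)^ε)^4/(4*n) * Real.exp (-(1/8)*k^2) := by
        gcongr

lemma bound_main {ε : ℝ} (hε0 : 0 < ε) (hε4 : ε ≤ 1/4) {n : ℕ} (hn : 2 ≤ n) (x : ℝ) :
    ‖∫ k in Set.Icc (-(n:ℝ)^ε) ((n:ℝ)^ε),
      (((sinc (k * Real.sqrt 3 / Real.sqrt n) ^ n : ℝ) : ℂ) * Complex.exp (-(Complex.I*k*x))
        - ((Real.exp (-(k^2/2)) : ℝ) : ℂ) * Complex.exp (-(Complex.I*k*x)))‖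
      ≤ ((n:ℝ)^ε)^4/(4*n) * Real.sqrt (8*Real.pi) := by
  have hn0 : (0:ℝ) < n := by positivity
  set T := (n:ℝ)^ε with hT
  have hFG : IntegrableOn (fun k : ℝ =>
      ((sinc (k * Real.sqrt 3 / Real.sqrt n) ^ n : ℝ) : ℂ) * Complex.exp (-(Complex.I*k*x))
        - ((Real.exp (-(k^2/2)) : ℝ) : ℂ) * Complex.exp (-(Complex.I*k*x))) (Set.Icc (-T) T) :=
    (fhat_integrableOn n x T).sub ((gauss_integrable x).integrableOn)
  calc ‖∫ k in Set.Icc (-T) T,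
      (((sinc (k * Real.sqrt 3 / Real.sqrt n) ^ n : ℝ) : ℂ) * Complex.exp (-(Complex.I*k*x))
        - ((Real.exp (-(k^2/2)) : ℝ) : ℂ) * Complex.exp (-(Complex.I*k*x)))‖
      ≤ ∫ k in Set.Icc (-T) T,
        ‖((sinc (k * Real.sqrt 3 / Real.sqrt n) ^ n : ℝ) : ℂ) * Complex.exp (-(Complex.I*k*x))
          - ((Real.exp (-(k^2/2)) : ℝ) : ℂ) * Complex.exp (-(Complex.I*k*x))‖ :=
        norm_integral_le_integral_norm _
    _ ≤ ∫ k in Set.Icc (-T) T, T^4/(4*(n:ℝ)) * Real.exp (-(1/8)*k^2) := by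
        apply setIntegral_mono_on hFG.norm
          (((integrable_exp_neg_mul_sq (by norm_num : (0:ℝ) < 1/8)).const_mul _).integrableOn)
          measurableSet_Icc
        intro k hk
        have heq : ((sinc (k * Real.sqrt 3 / Real.sqrt n) ^ n : ℝ) : ℂ) * Complex.exp (-(Complex.I*k*x))
            - ((Real.exp (-(k^2/2)) : ℝ) : ℂ) * Complex.exp (-(Complex.I*k*x))
            = (((sinc (k * Real.sqrt 3 / Real.sqrt n) ^ n - Real.exp (-(k^2/2)) : ℝ)) : ℂ)
              * Complex.exp (-(Complex.I*k*x)) := by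
          push_cast; ring
        rw [heq, norm_mul, Complex.norm_real, Real.norm_eq_abs,
          Complex.norm_exp, show (-(Complex.I*k*x)).re = 0 by simp, Real.exp_zero, mul_one]
        exact pointwise_main hε4 hn (sq_le_sq' hk.1 hk.2) hε0
    _ = T^4/(4*(n:ℝ)) * ∫ k in Set.Icc (-T) T, Real.exp (-(1/8)*k^2) :=
        integral_const_mul _ _
    _ ≤ T^4/(4*(n:ℝ)) * Real.sqrt (8*Real.pi) := by
        have h1 : ∫ k in Set.Icc (-T) T, Real.exp (-(1/8)*k^2) ≤ ∫ k : ℝ, Real.exp (-(1/8)*k^2) :=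
          setIntegral_le_integral (integrable_exp_neg_mul_sq (by norm_num))
            (Filter.Eventually.of_forall fun k => (Real.exp_pos _).le)
        have h2 : ∫ k : ℝ, Real.exp (-(1/8)*k^2) = Real.sqrt (8*Real.pi) := by
          rw [integral_gaussian, show (Real.pi/(1/8):ℝ) = 8*Real.pi by ring]
        rw [← h2]
        have : (0:ℝ) ≤ T^4/(4*(n:ℝ)) := by positivity
        exact mul_le_mul_of_nonneg_left h1 this

lemma bound_tail {ε : ℝ} (hε0 : 0 < ε) {n : ℕ} (hn : 1 ≤ n) (x : ℝ) :
    ‖∫ k in (Set.Icc (-(n:ℝ)^ε) ((n:ℝ)^ε))ᶜ,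
        ((Real.exp (-(k^2/2)) : ℝ) : ℂ) * Complex.exp (-(Complex.I*k*x))‖
      ≤ 2 * Real.sqrt Real.pi * (((Nat.factorial ⌈1/(2*ε)⌉₊ : ℝ) * 4^(⌈1/(2*ε)⌉₊:ℕ)) / n) := by
  set T := (n:ℝ)^ε with hT
  have hGnorm : ∀ k : ℝ, ‖((Real.exp (-(k^2/2)) : ℝ) : ℂ) * Complex.exp (-(Complex.I*k*x))‖
      = Real.exp (-(1/2)*k^2) := by
    intro k
    rw [norm_mul, Complex.norm_real, Real.norm_eq_abs,
      Complex.norm_exp, show (-(Complex.I*k*x)).re = 0 by simp, Real.exp_zero, mul_one,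
      abs_of_nonneg (Real.exp_nonneg _)]
    congr 1; ring
  calc ‖∫ k in (Set.Icc (-T) T)ᶜ, ((Real.exp (-(k^2/2)) : ℝ) : ℂ) * Complex.exp (-(Complex.I*k*x))‖
      ≤ ∫ k in (Set.Icc (-T) T)ᶜ,
          ‖((Real.exp (-(k^2/2)) : ℝ) : ℂ) * Complex.exp (-(Complex.I*k*x))‖ :=
        norm_integral_le_integral_norm _
    _ = ∫ k in (Set.Icc (-T) T)ᶜ, Real.exp (-(1/2)*k^2) := by
        apply integral_congr_ae
        filter_upwards with k
        exact hGnorm k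
    _ ≤ ∫ k in (Set.Icc (-T) T)ᶜ, Real.exp (-(T^2/4)) * Real.exp (-(1/4)*k^2) := by
        apply setIntegral_mono_on
          ((integrable_exp_neg_mul_sq (by norm_num : (0:ℝ) < 1/2)).integrableOn)
          (((integrable_exp_neg_mul_sq (by norm_num : (0:ℝ) < 1/4)).const_mul _).integrableOn)
          measurableSet_Icc.compl
        intro k hk
        have hT0 : (0:ℝ) < T := Real.rpow_pos_of_pos (by positivity) ε
        have hk2 : T^2 ≤ k^2 := by
          rw [Set.mem_compl_iff, Set.mem_Icc, not_and_or, not_le, not_le] at hk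
          rcases hk with h | h <;> nlinarith
        rw [← Real.exp_add, Real.exp_le_exp]
        linarith
    _ = Real.exp (-(T^2/4)) * ∫ k in (Set.Icc (-T) T)ᶜ, Real.exp (-(1/4)*k^2) :=
        integral_const_mul _ _
    _ ≤ Real.exp (-(T^2/4)) * (2 * Real.sqrt Real.pi) := by
        have h1 : ∫ k in (Set.Icc (-T) T)ᶜ, Real.exp (-(1/4)*k^2) ≤ ∫ k : ℝ, Real.exp (-(1/4)*k^2) :=
          setIntegral_le_integral (integrable_exp_neg_mul_sq (by norm_num))
            (Filter.Eventually.of_forall fun k => (Real.exp_pos _).le)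
        have h2 : ∫ k : ℝ, Real.exp (-(1/4)*k^2) = 2 * Real.sqrt Real.pi := by
          rw [integral_gaussian, show (Real.pi/(1/4):ℝ) = 2^2*Real.pi by ring,
            Real.sqrt_mul (by positivity), Real.sqrt_sq (by norm_num : (0:ℝ) ≤ 2)]
        rw [← h2]
        exact mul_le_mul_of_nonneg_left h1 (Real.exp_nonneg _)
    _ ≤ 2 * Real.sqrt Real.pi * (((Nat.factorial ⌈1/(2*ε)⌉₊ : ℝ) * 4^(⌈1/(2*ε)⌉₊:ℕ)) / n) := by
        rw [mul_comm]
        have h3 := tail_exp_bound hε0 (n := n) hn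
        gcongr

/-- Bulk (low-frequency) Fourier-inversion estimate from the proof of Lemma 3.1:
for `f̂_n(k) = sinc(k√3/√n)ⁿ` and every `ε ∈ (0, 1/4)`,
`(1/2π) ∫_{|k| ≤ n^ε} f̂_n(k) e^{−ikx} dk = φ(x) + O(n^{−1+4ε})` uniformly in `x`. -/
theorem bulk_fourier_inversion_estimate :
    ∀ ε ∈ Set.Ioo (0 : ℝ) (1 / 4), ∃ C > 0, ∀ n : ℕ, 1 ≤ n → ∀ x : ℝ,
      ‖((1 / (2 * Real.pi)) *
          (∫ k in Set.Icc (-(n : ℝ) ^ ε) ((n : ℝ) ^ ε),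
            ((sinc (k * Real.sqrt 3 / Real.sqrt n) ^ n : ℝ) : ℂ) *
              Complex.exp (-(Complex.I * k * x))) -
          (gaussDensity x : ℂ))‖ ≤ C * (n : ℝ) ^ (-1 + 4 * ε) := by
  rintro ε ⟨hε0, hε4⟩
  set m : ℕ := ⌈1/(2*ε)⌉₊ with hm
  set Cm : ℝ := (Nat.factorial m : ℝ) * 4^m with hCm
  have hCm0 : (0:ℝ) < Cm := by positivity
  refine ⟨2 + (Real.sqrt (8*Real.pi)/4 + 2*Real.sqrt Real.pi * Cm) / (2*Real.pi),
    by positivity, ?_⟩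
  intro n hn x
  have hn1 : (1:ℝ) ≤ (n:ℝ) := by exact_mod_cast hn
  have hn0 : (0:ℝ) < (n:ℝ) := by linarith
  set T : ℝ := (n:ℝ)^ε with hT
  have hT0 : (0:ℝ) < T := Real.rpow_pos_of_pos hn0 ε
  have habs2pi : ‖(1/(2*(Real.pi:ℂ)))‖ = 1/(2*Real.pi) := by
    rw [norm_div, norm_one, show (2*(Real.pi:ℂ)) = ((2*Real.pi:ℝ):ℂ) by push_cast; ring,
      Complex.norm_real, Real.norm_eq_abs, abs_of_pos (by positivity)]
  have hgauss : ((gaussDensity x : ℝ) : ℂ)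
      = (1/(2*(Real.pi:ℂ))) *
        ∫ k : ℝ, ((Real.exp (-(k^2/2)) : ℝ) : ℂ) * Complex.exp (-(Complex.I*k*x)) := by
    rw [gauss_fourier x, gaussDensity]
    have hs : Real.sqrt (2*Real.pi) * Real.sqrt (2*Real.pi) = 2*Real.pi :=
      Real.mul_self_sqrt (by positivity)
    have hs0 : Real.sqrt (2*Real.pi) ≠ 0 := by positivity
    have hkey : (1:ℝ)/(2*Real.pi) * Real.sqrt (2*Real.pi) = 1/Real.sqrt (2*Real.pi) := by
      rw [eq_div_iff hs0, mul_assoc, hs]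
      field_simp
    have hr : (1 / Real.sqrt (2 * Real.pi)) * Real.exp (-x ^ 2 / 2)
        = (1/(2*Real.pi)) * (Real.sqrt (2*Real.pi) * Real.exp (-x^2/2)) := by
      rw [← hkey]; ring
    rw [show ((1:ℂ)/(2*(Real.pi:ℂ))) = ((1/(2*Real.pi):ℝ):ℂ) by push_cast; ring,
      ← Complex.ofReal_mul, ← hr]
  rw [hgauss, ← mul_sub, norm_mul, habs2pi]
  have hsplit := integral_add_compl (measurableSet_Icc (a := -T) (b := T)) (gauss_integrable x)
  have hIccsub : (∫ k in Set.Icc (-T) T,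
        (((sinc (k * Real.sqrt 3 / Real.sqrt n) ^ n : ℝ) : ℂ) * Complex.exp (-(Complex.I*k*x))
          - ((Real.exp (-(k^2/2)) : ℝ) : ℂ) * Complex.exp (-(Complex.I*k*x))))
      = (∫ k in Set.Icc (-T) T,
          ((sinc (k * Real.sqrt 3 / Real.sqrt n) ^ n : ℝ) : ℂ) * Complex.exp (-(Complex.I*k*x)))
        - ∫ k in Set.Icc (-T) T, ((Real.exp (-(k^2/2)) : ℝ) : ℂ) * Complex.exp (-(Complex.I*k*x)) :=
    integral_sub (fhat_integrableOn n x T) ((gauss_integrable x).integrableOn)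
  have hdecomp : ‖(∫ k in Set.Icc (-T) T,
        ((sinc (k * Real.sqrt 3 / Real.sqrt n) ^ n : ℝ) : ℂ) * Complex.exp (-(Complex.I*k*x)))
      - ∫ k : ℝ, ((Real.exp (-(k^2/2)) : ℝ) : ℂ) * Complex.exp (-(Complex.I*k*x))‖
      ≤ ‖∫ k in Set.Icc (-T) T,
          (((sinc (k * Real.sqrt 3 / Real.sqrt n) ^ n : ℝ) : ℂ) * Complex.exp (-(Complex.I*k*x))
            - ((Real.exp (-(k^2/2)) : ℝ) : ℂ) * Complex.exp (-(Complex.I*k*x)))‖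
        + ‖∫ k in (Set.Icc (-T) T)ᶜ,
            ((Real.exp (-(k^2/2)) : ℝ) : ℂ) * Complex.exp (-(Complex.I*k*x))‖ := by
    rw [show (∫ k in Set.Icc (-T) T,
        ((sinc (k * Real.sqrt 3 / Real.sqrt n) ^ n : ℝ) : ℂ) * Complex.exp (-(Complex.I*k*x)))
      - ∫ k : ℝ, ((Real.exp (-(k^2/2)) : ℝ) : ℂ) * Complex.exp (-(Complex.I*k*x))
      = (∫ k in Set.Icc (-T) T,
          (((sinc (k * Real.sqrt 3 / Real.sqrt n) ^ n : ℝ) : ℂ) * Complex.exp (-(Complex.I*k*x))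
            - ((Real.exp (-(k^2/2)) : ℝ) : ℂ) * Complex.exp (-(Complex.I*k*x))))
        - ∫ k in (Set.Icc (-T) T)ᶜ,
            ((Real.exp (-(k^2/2)) : ℝ) : ℂ) * Complex.exp (-(Complex.I*k*x)) by
      rw [hIccsub, ← hsplit]; ring]
    exact norm_sub_le _ _
  have htail := bound_tail hε0 hn x
  simp only [← hm, ← hCm] at htail
  rw [← hT] at htail
  rcases eq_or_lt_of_le hn with h1 | h2
  · -- n = 1
    have hn1' : n = 1 := h1.symm
    subst hn1'
    have hTeq : T = 1 := by rw [hT]; norm_num [Real.one_rpow]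
    have hrpow1 : ((1:ℕ):ℝ) ^ (-1+4*ε) = 1 := by norm_num [Real.one_rpow]
    have hmain1 : ‖∫ k in Set.Icc (-T) T,
          (((sinc (k * Real.sqrt 3 / Real.sqrt ((1:ℕ):ℝ)) ^ 1 : ℝ) : ℂ) * Complex.exp (-(Complex.I*k*x))
            - ((Real.exp (-(k^2/2)) : ℝ) : ℂ) * Complex.exp (-(Complex.I*k*x)))‖ ≤ 4 := by
      have := norm_setIntegral_le_of_norm_le_const (μ := volume) (s := Set.Icc (-T) T) (C := 2)
        (measure_Icc_lt_top) (f := fun k =>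
          (((sinc (k * Real.sqrt 3 / Real.sqrt ((1:ℕ):ℝ)) ^ 1 : ℝ) : ℂ) * Complex.exp (-(Complex.I*k*x))
            - ((Real.exp (-(k^2/2)) : ℝ) : ℂ) * Complex.exp (-(Complex.I*k*x)))) ?_
      · refine le_trans this ?_
        rw [Real.volume_real_Icc, hTeq]
        rw [show (1:ℝ) - -1 = 2 by norm_num]
        norm_num
      · intro k _
        refine le_trans (norm_sub_le _ _) ?_
        have e1 : ‖((sinc (k * Real.sqrt 3 / Real.sqrt ((1:ℕ):ℝ)) ^ 1 : ℝ) : ℂ) * Complex.exp (-(Complex.I*k*x))‖ ≤ 1 := by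
          rw [norm_mul, Complex.norm_real, Real.norm_eq_abs,
            Complex.norm_exp, show (-(Complex.I*k*x)).re = 0 by simp, Real.exp_zero, mul_one, pow_one]
          exact sinc_abs_le_one _
        have e2 : ‖((Real.exp (-(k^2/2)) : ℝ) : ℂ) * Complex.exp (-(Complex.I*k*x))‖ ≤ 1 := by
          rw [norm_mul, Complex.norm_real, Real.norm_eq_abs,
            Complex.norm_exp, show (-(Complex.I*k*x)).re = 0 by simp, Real.exp_zero, mul_one,
            abs_of_nonneg (Real.exp_nonneg _)]
          exact Real.exp_le_one_iff.mpr (by nlinarith [sq_nonneg k])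
        linarith
    rw [hrpow1, mul_one]
    have hπ3 : (3:ℝ) < Real.pi := Real.pi_gt_three
    have hstep : (1:ℝ)/(2*Real.pi) * (4 + 2*Real.sqrt Real.pi * (Cm / 1))
        ≤ 2 + (Real.sqrt (8*Real.pi)/4 + 2*Real.sqrt Real.pi * Cm) / (2*Real.pi) := by
      have h8 : (0:ℝ) ≤ Real.sqrt (8*Real.pi) := Real.sqrt_nonneg _
      have hsp : (0:ℝ) ≤ Real.sqrt Real.pi := Real.sqrt_nonneg _
      have e1 : (1:ℝ)/(2*Real.pi) * (4 + 2*Real.sqrt Real.pi * (Cm / 1))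
          = 2/Real.pi + (2*Real.sqrt Real.pi * Cm)/(2*Real.pi) := by
        field_simp
        ring
      have e2 : (Real.sqrt (8*Real.pi)/4 + 2*Real.sqrt Real.pi * Cm) / (2*Real.pi)
          = (Real.sqrt (8*Real.pi)/4)/(2*Real.pi) + (2*Real.sqrt Real.pi * Cm)/(2*Real.pi) :=
        add_div _ _ _
      have h2pi : 2/Real.pi ≤ 2 := by
        rw [div_le_iff₀ Real.pi_pos]; nlinarith
      have h3 : (0:ℝ) ≤ (Real.sqrt (8*Real.pi)/4)/(2*Real.pi) := by positivity
      rw [e1, e2]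
      linarith
    calc (1:ℝ)/(2*Real.pi) * ‖_‖ ≤ (1:ℝ)/(2*Real.pi) * (4 + 2*Real.sqrt Real.pi * (Cm / 1)) := by
          gcongr
          exact le_trans hdecomp (by
            have htail' : ‖∫ k in (Set.Icc (-T) T)ᶜ,
                ((Real.exp (-(k^2/2)) : ℝ) : ℂ) * Complex.exp (-(Complex.I*k*x))‖
                ≤ 2*Real.sqrt Real.pi * (Cm/1) := by
              refine le_trans htail (le_of_eq ?_)
              norm_num
            linarith [hmain1, htail'])
      _ ≤ _ := hstep
  · -- n ≥ 2
    have hn2 : 2 ≤ n := h2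
    have hmain := bound_main hε0 (le_of_lt hε4) hn2 x
    rw [← hT] at hmain
    -- rpow arithmetic
    have hT4 : T^4 = (n:ℝ)^(4*ε) := by
      rw [hT, ← Real.rpow_natCast ((n:ℝ)^ε) 4, ← Real.rpow_mul hn0.le]
      norm_num [mul_comm]
    have hT4n : T^4/(n:ℝ) = (n:ℝ)^(-1+4*ε) := by
      rw [hT4, Real.rpow_add hn0, Real.rpow_neg_one]
      field_simp
    have hinv : ((n:ℝ))⁻¹ ≤ (n:ℝ)^(-1+4*ε) := by
      rw [← Real.rpow_neg_one]
      exact Real.rpow_le_rpow_of_exponent_le hn1 (by linarith)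
    have hrp0 : (0:ℝ) ≤ (n:ℝ)^(-1+4*ε) := (Real.rpow_pos_of_pos hn0 _).le
    calc (1:ℝ)/(2*Real.pi) * ‖_‖
        ≤ (1:ℝ)/(2*Real.pi) * (T^4/(4*n) * Real.sqrt (8*Real.pi)
            + 2*Real.sqrt Real.pi * (Cm/n)) := by
          gcongr
          exact le_trans hdecomp (by linarith [hmain, htail])
      _ ≤ (1:ℝ)/(2*Real.pi) * ((n:ℝ)^(-1+4*ε) * (Real.sqrt (8*Real.pi)/4)
            + 2*Real.sqrt Real.pi * Cm * (n:ℝ)^(-1+4*ε)) := by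
          gcongr (1:ℝ)/(2*Real.pi) * (?_ + ?_)
          · rw [show T^4/(4*(n:ℝ)) * Real.sqrt (8*Real.pi)
                = (T^4/(n:ℝ)) * (Real.sqrt (8*Real.pi)/4) by ring, hT4n]
          · rw [div_eq_mul_inv Cm, ← mul_assoc]
            gcongr
      _ = (n:ℝ)^(-1+4*ε) * ((Real.sqrt (8*Real.pi)/4 + 2*Real.sqrt Real.pi * Cm) / (2*Real.pi)) := by
          ring
      _ ≤ (2 + (Real.sqrt (8*Real.pi)/4 + 2*Real.sqrt Real.pi * Cm) / (2*Real.pi)) * (n:ℝ)^(-1+4*ε) := by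
          nlinarith [hrp0]
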